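/- Define for y ∈ [0, 3/4] the maximum of z(p₂,p₄) = 1 − 2y + (√p₂ − √p₄)² over (p₂,p₄) subject to the ordering constraints p₁ = 1−y ≥ p₂ ≥ p₃ ≥ p₄ ≥ 0 and p₁+p₂+p₃+p₄ = 1 (so p₃ = y − p₂ − p₄ ≥ 0). Then the maximum equals 1−y if y ∈ [0, 1/2] (attained at (p₂,p₄) = (y,0)), equals 2−3y if y ∈ [1/2, 2/3] (attained at (1−y, 0)... i.e., p₂ = 1−y, p₄ = 0), and the maximum of max{0, z} is 0 if y ∈ [2/3, 3/4]. -/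
import Mathlib


/-- maximum of `z(p₂,p₄) = 1 − 2y + (√p₂ − √p₄)²` over the feasible
set `{0 ≤ p₄ ≤ p₃ ≤ p₂ ≤ 1−y, p₃ = y − p₂ − p₄}`: it equals `1 − y` for
`y ∈ [0,1/2]` (attained at `(y,0)`), `2 − 3y` for `y ∈ [1/2,2/3]` (attained at
`(1−y,0)`), and the maximum of `max{0,z}` is `0` for `y ∈ [2/3,3/4]`. -/
theorem stmt_18 (y : ℝ) (hy : y ∈ Set.Icc (0 : ℝ) (3 / 4))
    (F : Set (ℝ × ℝ))
    (hF : F = {q : ℝ × ℝ | 0 ≤ q.2 ∧ q.2 ≤ y - q.1 - q.2 ∧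
      y - q.1 - q.2 ≤ q.1 ∧ q.1 ≤ 1 - y})
    (z : ℝ × ℝ → ℝ)
    (hz : z = fun q => 1 - 2 * y + (Real.sqrt q.1 - Real.sqrt q.2) ^ 2) :
    (y ≤ 1 / 2 → IsGreatest (z '' F) (1 - y) ∧ (y, 0) ∈ F ∧ z (y, 0) = 1 - y) ∧
    (y ∈ Set.Icc (1 / 2 : ℝ) (2 / 3) →
      IsGreatest (z '' F) (2 - 3 * y) ∧ (1 - y, 0) ∈ F ∧ z (1 - y, 0) = 2 - 3 * y) ∧
    (2 / 3 ≤ y → IsGreatest ((fun q => max 0 (z q)) '' F) 0) := by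
  obtain ⟨hy0, hy34⟩ := hy
  subst hF hz
  -- key bound: (√p₂ − √p₄)² ≤ p₂ on F
  have key : ∀ a b : ℝ, 0 ≤ b → b ≤ a → (Real.sqrt a - Real.sqrt b) ^ 2 ≤ a := by
    intro a b hb hba
    have ha : (0:ℝ) ≤ a := le_trans hb hba
    have hs : Real.sqrt b ≤ Real.sqrt a := Real.sqrt_le_sqrt hba
    have h1 := Real.sq_sqrt ha
    have h2 := Real.sq_sqrt hb
    have h3 := Real.sqrt_nonneg a
    have h4 := Real.sqrt_nonneg b
    nlinarith [mul_le_mul_of_nonneg_right hs h4]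
  refine ⟨?_, ?_, ?_⟩
  · intro hy2
    have hmem : ((y, 0) : ℝ × ℝ) ∈ {q : ℝ × ℝ | 0 ≤ q.2 ∧ q.2 ≤ y - q.1 - q.2 ∧
        y - q.1 - q.2 ≤ q.1 ∧ q.1 ≤ 1 - y} := by
      simp only [Set.mem_setOf_eq]
      constructor; · norm_num
      constructor; · norm_num
      constructor; · linarith
      · linarith
    have hval : (fun q : ℝ × ℝ => 1 - 2 * y + (Real.sqrt q.1 - Real.sqrt q.2) ^ 2) (y, 0)
        = 1 - y := by
      simp [Real.sqrt_zero, Real.sq_sqrt hy0]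
      ring
    refine ⟨⟨⟨(y, 0), hmem, hval⟩, ?_⟩, hmem, hval⟩
    rintro x ⟨⟨a, b⟩, ⟨h1, h2, h3, h4⟩, rfl⟩
    simp only at h1 h2 h3 h4 ⊢
    have hba : b ≤ a := by linarith
    have := key a b h1 hba
    have ha_le : a ≤ y := by linarith
    linarith
  · rintro ⟨hyl, hyr⟩
    have hmem : ((1 - y, 0) : ℝ × ℝ) ∈ {q : ℝ × ℝ | 0 ≤ q.2 ∧ q.2 ≤ y - q.1 - q.2 ∧
        y - q.1 - q.2 ≤ q.1 ∧ q.1 ≤ 1 - y} := by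
      simp only [Set.mem_setOf_eq]
      refine ⟨le_refl 0, by linarith, by linarith, le_refl _⟩
    have h1y : (0:ℝ) ≤ 1 - y := by linarith
    have hval : (fun q : ℝ × ℝ => 1 - 2 * y + (Real.sqrt q.1 - Real.sqrt q.2) ^ 2) (1 - y, 0)
        = 2 - 3 * y := by
      simp [Real.sqrt_zero, Real.sq_sqrt h1y]
      ring
    refine ⟨⟨⟨(1 - y, 0), hmem, hval⟩, ?_⟩, hmem, hval⟩
    rintro x ⟨⟨a, b⟩, ⟨h1, h2, h3, h4⟩, rfl⟩
    simp only at h1 h2 h3 h4 ⊢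
    have hba : b ≤ a := by linarith
    have := key a b h1 hba
    linarith
  · intro hy23
    have hmem : ((y / 3, y / 3) : ℝ × ℝ) ∈ {q : ℝ × ℝ | 0 ≤ q.2 ∧ q.2 ≤ y - q.1 - q.2 ∧
        y - q.1 - q.2 ≤ q.1 ∧ q.1 ≤ 1 - y} := by
      simp only [Set.mem_setOf_eq]
      refine ⟨by linarith, by linarith, by linarith, by linarith⟩
    constructor
    · refine ⟨(y / 3, y / 3), hmem, ?_⟩
      simp only
      have : 1 - 2 * y + (Real.sqrt (y/3) - Real.sqrt (y/3)) ^ 2 = 1 - 2 * y := by ring_nf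
      rw [this]
      exact max_eq_left (by linarith)
    · rintro x ⟨⟨a, b⟩, ⟨h1, h2, h3, h4⟩, rfl⟩
      simp only at h1 h2 h3 h4 ⊢
      have hba : b ≤ a := by linarith
      have := key a b h1 hba
      have : 1 - 2 * y + (Real.sqrt a - Real.sqrt b) ^ 2 ≤ 0 := by linarith
      exact max_le le_rfl this
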